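/- For every nonconstant inner function θ₀, the model space H_{θ₀} = H^2 ⊖ θ₀H^2 contains an outer function that is invertible in H^∞. -/

import Mathlib

open MeasureTheory Complex Submodule
noncomputable section
instance fact2pi : Fact (0 < 2 * Real.pi) := ⟨by positivity⟩
instance factTop1 : Fact ((1:ENNReal) ≤ (⊤:ENNReal)) := ⟨le_top⟩
/-- the circle group -/
abbrev Tc := AddCircle (2 * Real.pi)
/-- normalized Haar measure on the circle -/
abbrev muh : Measure Tc := AddCircle.haarAddCircle
/-- L² of the circle -/
abbrev L2 := Lp ℂ 2 muh
/-- L^∞ of the circle -/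
abbrev Linf := Lp ℂ ⊤ muh

/-- The Hardy space `H²` as a closed subspace of `L²` of the circle. -/
def H2 : Submodule ℂ L2 :=
  (span ℂ (Set.range fun n : ℕ => (fourierLp 2 (n : ℤ) : L2))).topologicalClosure

theorem isClosed_H2 : IsClosed (H2 : Set L2) := Submodule.isClosed_topologicalClosure _
instance : CompleteSpace H2 := IsClosed.completeSpace_coe (hs := isClosed_H2)

theorem memLp2_mul (φ : Linf) (g : L2) :
    MemLp ((φ : Tc → ℂ) • (g : Tc → ℂ)) 2 muh :=
  MemLp.smul (Lp.memLp g) (Lp.memLp φ)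

/-- multiplication of an `L∞` function and an `L²` function, as an element of `L²`. -/
def mulL2 (φ : Linf) (g : L2) : L2 := (memLp2_mul φ g).toLp _

theorem mulL2_add (φ : Linf) (g h : L2) : mulL2 φ (g + h) = mulL2 φ g + mulL2 φ h := by
  simp only [mulL2]
  rw [← MemLp.toLp_add]
  apply MemLp.toLp_congr
  filter_upwards [Lp.coeFn_add g h] with x hx
  simp only [Pi.mul_apply, Pi.smul_apply, smul_eq_mul, hx, Pi.add_apply]
  ring

theorem mulL2_smul (φ : Linf) (c : ℂ) (g : L2) : mulL2 φ (c • g) = c • mulL2 φ g := by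
  simp only [mulL2]
  rw [← MemLp.toLp_const_smul]
  apply MemLp.toLp_congr
  filter_upwards [Lp.coeFn_smul c g] with x hx
  simp only [Pi.mul_apply, Pi.smul_apply, smul_eq_mul, hx]
  ring

theorem mulL2_norm (φ : Linf) (g : L2) : ‖mulL2 φ g‖ ≤ ‖φ‖ * ‖g‖ := by
  rw [mulL2, Lp.norm_toLp]
  have h : eLpNorm ((φ : Tc → ℂ) • (g : Tc → ℂ)) 2 muh ≤
      eLpNorm (φ : Tc → ℂ) ⊤ muh * eLpNorm (g : Tc → ℂ) 2 muh :=
    eLpNorm_smul_le_mul_eLpNorm (Lp.aestronglyMeasurable g) (Lp.aestronglyMeasurable φ)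
  calc (eLpNorm ((φ : Tc → ℂ) • (g : Tc → ℂ)) 2 muh).toReal
      ≤ (eLpNorm (φ : Tc → ℂ) ⊤ muh * eLpNorm (g : Tc → ℂ) 2 muh).toReal := by
        apply ENNReal.toReal_mono
        · exact ENNReal.mul_ne_top (Lp.eLpNorm_ne_top φ) (Lp.eLpNorm_ne_top g)
        · exact h
    _ = ‖φ‖ * ‖g‖ := by
        rw [ENNReal.toReal_mul, Lp.norm_def, Lp.norm_def]

/-- Multiplication by an `L^∞` function as a continuous linear operator on `L²`. -/
def Mmul (φ : Linf) : L2 →L[ℂ] L2 :=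
  LinearMap.mkContinuous
    { toFun := mulL2 φ
      map_add' := mulL2_add φ
      map_smul' := mulL2_smul φ } ‖φ‖ (mulL2_norm φ)

/-- the orthogonal projection `P : L² → H²`. -/
abbrev P2 : L2 →L[ℂ] ↥H2 := orthogonalProjection H2

/-- The Toeplitz operator with symbol `φ ∈ L^∞`, acting on `H²`: `T_φ g = P (φ g)`. -/
def Toep (φ : Linf) : ↥H2 →L[ℂ] ↥H2 := P2 ∘L (Mmul φ) ∘L H2.subtypeL

/-- The Toeplitz operator, viewed as a map `L² → L²` (useful to avoid coercions). -/
def TopL (φ : Linf) : L2 →L[ℂ] L2 := H2.subtypeL ∘L P2 ∘L Mmul φ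

theorem memLpTop_mul (φ ψ : Linf) : MemLp ((φ : Tc → ℂ) • (ψ : Tc → ℂ)) ⊤ muh :=
  MemLp.smul (Lp.memLp ψ) (Lp.memLp φ)

/-- `L^∞` is closed under products; we register this as a `Mul` instance. -/
instance : Mul Linf := ⟨fun φ ψ => (memLpTop_mul φ ψ).toLp _⟩

/-- the constant function `1` in `L^∞`. -/
instance : One Linf := ⟨(memLp_top_const (1 : ℂ)).toLp _⟩

/-- the embedding of `L^∞` into `L²` (the measure is finite). -/
def toL2 (φ : Linf) : L2 := ((Lp.memLp φ).mono_exponent le_top).toLp _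

/-- `H^∞`: the essentially bounded functions lying in the Hardy space. -/
def Hinf : Set Linf := {φ | toL2 φ ∈ H2}

/-- pointwise complex conjugation on `L²`. -/
def conjL2 (f : L2) : L2 :=
  ((Complex.conjCLE.toContinuousLinearMap).comp_memLp' (Lp.memLp f)).toLp _

/-- pointwise complex conjugation on `L^∞`. -/
def conjLinf (φ : Linf) : Linf :=
  ((Complex.conjCLE.toContinuousLinearMap).comp_memLp' (Lp.memLp φ)).toLp _

/-- composition with `z ↦ z⁻¹` (i.e. `x ↦ -x` on the additive circle) on `L²`. -/
def compNegL2 : L2 →ₗᵢ[ℂ] L2 :=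
  Lp.compMeasurePreservingₗᵢ ℂ (fun x : Tc => -x) (Measure.measurePreserving_neg muh)

/-- composition with `z ↦ z⁻¹` on `L^∞`. -/
def compNegLinf (φ : Linf) : Linf :=
  Lp.compMeasurePreserving (fun x : Tc => -x) (Measure.measurePreserving_neg muh) φ

/-- `φ̃(z) = conj (φ (z̄))`. -/
def tildeL (φ : Linf) : Linf := conjLinf (compNegLinf φ)

/-- `f̃(z) = conj (f (z̄))` on `L²`. -/
def tilde2 (f : L2) : L2 := conjL2 (compNegL2 f)

/-- the unitary `J` on `L²`: `(J f)(z) = z̄ f(z̄)`. -/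
def Jop : L2 →L[ℂ] L2 := (Mmul (fourierLp ⊤ (-1))) ∘L compNegL2.toContinuousLinearMap

/-- the projection onto `(H²)^⊥`. -/
def PperpL : L2 →L[ℂ] L2 := ContinuousLinearMap.id ℂ L2 - H2.subtypeL ∘L P2

/-- The Hankel operator with symbol `φ`: `H_φ g = J P^⊥ (φ g)`. -/
def Hank (φ : Linf) : ↥H2 →L[ℂ] L2 := Jop ∘L PperpL ∘L (Mmul φ) ∘L H2.subtypeL

/-- the self-commutator `[T^*, T] = T^*T - TT^*`. -/
def selfCommOp {H : Type*} [NormedAddCommGroup H] [InnerProductSpace ℂ H] [CompleteSpace H]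
    (T : H →L[ℂ] H) : H →L[ℂ] H :=
  ContinuousLinearMap.adjoint T ∘L T - T ∘L ContinuousLinearMap.adjoint T

/-- hyponormality of a Hilbert-space operator. -/
def IsHyponormalOp {H : Type*} [NormedAddCommGroup H] [InnerProductSpace ℂ H] [CompleteSpace H]
    (T : H →L[ℂ] H) : Prop := (selfCommOp T).IsPositive

/-- normality of a Hilbert-space operator. -/
def IsNormalOp {H : Type*} [NormedAddCommGroup H] [InnerProductSpace ℂ H] [CompleteSpace H]
    (T : H →L[ℂ] H) : Prop := selfCommOp T = 0

/-- finite rank operator. -/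
def FiniteRankOp {H : Type*} [NormedAddCommGroup H] [InnerProductSpace ℂ H]
    (T : H →L[ℂ] H) : Prop := FiniteDimensional ℂ ↥(LinearMap.range (T : H →ₗ[ℂ] H))

/-- `φ` is of bounded type: a quotient of two `H^∞` functions. -/
def BoundedType (φ : Linf) : Prop :=
  ∃ ψ₁ ψ₂ : Linf, ψ₁ ∈ Hinf ∧ ψ₂ ∈ Hinf ∧ (∀ᵐ x ∂muh, (ψ₂ : Tc → ℂ) x ≠ 0) ∧
    (∀ᵐ x ∂muh, (φ : Tc → ℂ) x = (ψ₁ : Tc → ℂ) x / (ψ₂ : Tc → ℂ) x)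

/-- scalar inner function. -/
def IsInner (θ : Linf) : Prop := θ ∈ Hinf ∧ ∀ᵐ x ∂muh, ‖(θ : Tc → ℂ) x‖ = 1

/-- constant function in `L^∞`. -/
def IsConstLinf (θ : Linf) : Prop := ∃ c : ℂ, θ = c • (1 : Linf)

/-- the boundary function `z = e^{ix}` on the circle. -/
def zfun : Tc → ℂ := fun x => fourier 1 x

/-- finite Blaschke product. -/
def IsFiniteBlaschke (θ : Linf) : Prop :=
  ∃ (c : ℂ) (N : ℕ) (α : Fin N → ℂ), ‖c‖ = 1 ∧ (∀ i, ‖α i‖ < 1) ∧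
    ∀ᵐ x ∂muh, (θ : Tc → ℂ) x =
      c * ∏ i, (zfun x - α i) / (1 - (starRingEnd ℂ (α i)) * zfun x)

/-- divisibility of inner functions: `θ` divides `θ'`. -/
def InnerDivides (θ θ' : Linf) : Prop := ∃ ω : Linf, IsInner ω ∧ θ' = θ * ω

/-- evaluation of an `H²` function inside the disk, via its Taylor (Fourier) coefficients. -/
def evalDisk (f : L2) (α : ℂ) : ℂ := ∑' k : ℕ, fourierCoeff (f : Tc → ℂ) (k : ℤ) * α ^ k

/-- the model space `H_θ = H² ⊖ θH²`. -/
def ModelSpace (θ : Linf) : Submodule ℂ L2 := H2 ⊓ (Submodule.map (Mmul θ : L2 →ₗ[ℂ] L2) H2)ᗮ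

/-- outer function: the closed span of its (analytic) polynomial multiples is all of `H²`. -/
def IsOuter (h : L2) : Prop :=
  (span ℂ (Set.range fun n : ℕ => mulL2 (fourierLp ⊤ (n : ℤ)) h)).topologicalClosure = H2

/-- `h` coincides with an `H^∞` function which is invertible in `H^∞`. -/
def InvertibleHinf (h : L2) : Prop :=
  ∃ u v : Linf, toL2 u = h ∧ u ∈ Hinf ∧ v ∈ Hinf ∧ u * v = 1

/-- the set `E(φ)` appearing in Cowen's hyponormality criterion. -/
def Ecal (φ : Linf) : Set Linf :=
  {k | k ∈ Hinf ∧ ‖k‖ ≤ 1 ∧ φ - k * conjLinf φ ∈ Hinf}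

theorem isClosed_modelSpace (θ : Linf) : IsClosed ((ModelSpace θ : Set L2)) := by
  rw [ModelSpace, Submodule.coe_inf]
  exact isClosed_H2.inter (Submodule.isClosed_orthogonal _)

instance (θ : Linf) : CompleteSpace (ModelSpace θ) :=
  IsClosed.completeSpace_coe (hs := isClosed_modelSpace θ)

/-- the orthogonal projection of `L²` onto the model space `H_θ`, as an endomorphism of `L²`. -/
def Pmodel (θ : Linf) : L2 →L[ℂ] L2 :=
  (ModelSpace θ).subtypeL ∘L orthogonalProjection (ModelSpace θ)




section Aux

open scoped InnerProductSpace ComplexConjugate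

lemma inner_fourierLp (f : L2) (n : ℤ) :
    ⟪(fourierLp 2 n : L2), f⟫_ℂ = fourierCoeff (f : Tc → ℂ) n := by
  rw [← fourierBasis_repr, fourierBasis.repr_apply_apply, coe_fourierBasis]

lemma fourierCoeff_congr_ae' {f g : Tc → ℂ} (h : f =ᵐ[muh] g) (n : ℤ) :
    fourierCoeff f n = fourierCoeff g n := by
  unfold fourierCoeff
  exact integral_congr_ae (by filter_upwards [h] with x hx using by rw [hx])

lemma fourierCoeff_fourierLp (m n : ℤ) :
    fourierCoeff ((fourierLp 2 m : L2) : Tc → ℂ) n = if n = m then 1 else 0 := by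
  rw [← inner_fourierLp]
  exact orthonormal_iff_ite.mp orthonormal_fourier n m

lemma fourierCoeff_eq_zero_of_mem_H2 {f : L2} (hf : f ∈ H2) {n : ℤ} (hn : n < 0) :
    fourierCoeff (f : Tc → ℂ) n = 0 := by
  have hker : H2 ≤ LinearMap.ker (innerSL ℂ (fourierLp 2 n : L2) : L2 →ₗ[ℂ] ℂ) := by
    apply Submodule.topologicalClosure_minimal
    · rw [Submodule.span_le]
      rintro _ ⟨k, rfl⟩
      simp only [SetLike.mem_coe, LinearMap.mem_ker, ContinuousLinearMap.coe_coe,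
        innerSL_apply_apply]
      rw [inner_fourierLp, fourierCoeff_fourierLp]
      have : n ≠ (k : ℤ) := by omega
      simp [this]
    · exact ContinuousLinearMap.isClosed_ker _
  have h2 := hker hf
  rw [LinearMap.mem_ker] at h2
  rw [← inner_fourierLp]
  exact h2

lemma mem_H2_of_fourierCoeff {f : L2}
    (hf : ∀ n : ℤ, n < 0 → fourierCoeff (f : Tc → ℂ) n = 0) : f ∈ H2 := by
  have hsum := hasSum_fourier_series_L2 f
  have : f ∈ closure ((span ℂ (Set.range fun n : ℕ => (fourierLp 2 (n : ℤ) : L2))) : Set L2) := by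
    refine mem_closure_of_tendsto hsum (Filter.Eventually.of_forall fun s => ?_)
    refine Submodule.sum_mem _ fun i _ => ?_
    by_cases h : i < 0
    · rw [hf i h, zero_smul]; exact Submodule.zero_mem _
    · exact Submodule.smul_mem _ _
        (Submodule.subset_span ⟨i.toNat, by simp [Int.toNat_of_nonneg (not_lt.mp h)]⟩)
  exact this

lemma coeFn_Mmul (φ : Linf) (f : L2) :
    (Mmul φ f : Tc → ℂ) =ᵐ[muh] fun x => (φ : Tc → ℂ) x * (f : Tc → ℂ) x :=
  (memLp2_mul φ f).coeFn_toLp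

lemma fourierCoeff_Mmul_fourierLp (φ : Linf) (k n : ℤ) :
    fourierCoeff ((Mmul φ (fourierLp 2 k) : L2) : Tc → ℂ) n
      = fourierCoeff (φ : Tc → ℂ) (n - k) := by
  have h1 : (Mmul φ (fourierLp 2 k) : Tc → ℂ)
      =ᵐ[muh] fun x => (φ : Tc → ℂ) x * fourier k x := by
    filter_upwards [coeFn_Mmul φ (fourierLp 2 k), coeFn_fourierLp 2 k] with x hx hx'
    rw [hx, hx']
  rw [fourierCoeff_congr_ae' h1]
  unfold fourierCoeff
  refine integral_congr_ae (Filter.Eventually.of_forall fun x => ?_)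
  have : fourier (-(n - k)) x = fourier (-n) x * fourier k x := by
    rw [← fourier_add]; ring_nf
  simp only [smul_eq_mul, this]
  ring

lemma Mmul_mem_H2 {φ : Linf} (hφ : ∀ n : ℤ, n < 0 → fourierCoeff (φ : Tc → ℂ) n = 0)
    {f : L2} (hf : f ∈ H2) : Mmul φ f ∈ H2 := by
  have hle : H2 ≤ Submodule.comap (Mmul φ : L2 →ₗ[ℂ] L2) H2 := by
    apply Submodule.topologicalClosure_minimal
    · rw [Submodule.span_le]
      rintro _ ⟨k, rfl⟩
      simp only [SetLike.mem_coe, Submodule.mem_comap, ContinuousLinearMap.coe_coe]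
      exact mem_H2_of_fourierCoeff fun n hn => by
        rw [fourierCoeff_Mmul_fourierLp]
        exact hφ _ (by omega)
    · exact IsClosed.preimage (Mmul φ).continuous isClosed_H2
  exact hle hf

lemma integrable_of_bdd {f : Tc → ℂ} (hm : AEStronglyMeasurable f muh) {C : ℝ}
    (h : ∀ᵐ x ∂muh, ‖f x‖ ≤ C) : Integrable f muh :=
  (memLp_top_of_bound hm C h).integrable le_top

lemma norm_fourier' (n : ℤ) (x : Tc) : ‖fourier n x‖ = 1 := Circle.norm_coe _

lemma coeFn_toL2 (φ : Linf) : (toL2 φ : Tc → ℂ) =ᵐ[muh] (φ : Tc → ℂ) := MemLp.coeFn_toLp _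

lemma mem_Hinf_iff {φ : Linf} :
    φ ∈ Hinf ↔ ∀ n : ℤ, n < 0 → fourierCoeff ((φ : Tc → ℂ)) n = 0 := by
  constructor
  · intro h n hn
    have h2 := fourierCoeff_eq_zero_of_mem_H2 h hn
    rwa [fourierCoeff_congr_ae' (coeFn_toL2 φ)] at h2
  · intro h
    exact mem_H2_of_fourierCoeff fun n hn => by
      rw [fourierCoeff_congr_ae' (coeFn_toL2 φ)]; exact h n hn

lemma fourierCoeff_one' (n : ℤ) :
    fourierCoeff (fun _ : Tc => (1 : ℂ)) n = if n = 0 then 1 else 0 := by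
  have h : ((fourierLp 2 0 : L2) : Tc → ℂ) =ᵐ[muh] fun _ : Tc => (1 : ℂ) := by
    filter_upwards [coeFn_fourierLp 2 (0 : ℤ)] with x hx
    rw [hx]; exact fourier_zero
  rw [← fourierCoeff_congr_ae' h, fourierCoeff_fourierLp]

lemma coeFn_one_Linf : ((1 : Linf) : Tc → ℂ) =ᵐ[muh] fun _ => (1 : ℂ) :=
  (memLp_top_const (1 : ℂ)).coeFn_toLp

lemma coeFn_mulL2 (φ : Linf) (g : L2) :
    (mulL2 φ g : Tc → ℂ) =ᵐ[muh] fun x => (φ : Tc → ℂ) x * (g : Tc → ℂ) x :=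
  (memLp2_mul φ g).coeFn_toLp

lemma inner_L2_congr {f g f' g' : L2}
    (h : (fun x => (starRingEnd ℂ) ((f : Tc → ℂ) x) * (g : Tc → ℂ) x)
      =ᵐ[muh] fun x => (starRingEnd ℂ) ((f' : Tc → ℂ) x) * (g' : Tc → ℂ) x) :
    ⟪f, g⟫_ℂ = ⟪f', g'⟫_ℂ := by
  rw [MeasureTheory.L2.inner_def, MeasureTheory.L2.inner_def]
  refine integral_congr_ae ?_
  filter_upwards [h] with x hx
  simp [RCLike.inner_apply]
  linear_combination hx

lemma pow_coeff_zero {θ : Linf} (hθ : θ ∈ Hinf)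
    (hθ1 : ∀ᵐ x ∂muh, ‖(θ : Tc → ℂ) x‖ = 1) (k : ℕ) :
    ∀ n : ℤ, n < 0 → fourierCoeff (fun x => (θ : Tc → ℂ) x ^ k) n = 0 := by
  induction k with
  | zero =>
      intro n hn
      rw [show (fun x : Tc => (θ : Tc → ℂ) x ^ 0) = fun _ => (1 : ℂ) by funext x; simp,
        fourierCoeff_one', if_neg (by omega)]
  | succ k ih =>
      have hmem : MemLp (fun x => (θ : Tc → ℂ) x ^ k) 2 muh := by
        refine (memLp_top_of_bound ?_ 1 ?_).mono_exponent le_top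
        · exact ((Lp.aestronglyMeasurable θ).aemeasurable.pow_const k).aestronglyMeasurable
        · filter_upwards [hθ1] with x hx
          rw [norm_pow, hx, one_pow]
      have hf : hmem.toLp _ ∈ H2 := mem_H2_of_fourierCoeff fun n hn => by
        rw [fourierCoeff_congr_ae' hmem.coeFn_toLp]; exact ih n hn
      intro n hn
      have h2 := fourierCoeff_eq_zero_of_mem_H2 (Mmul_mem_H2 (mem_Hinf_iff.mp hθ) hf) hn
      rw [← h2]
      apply fourierCoeff_congr_ae'
      filter_upwards [coeFn_Mmul θ (hmem.toLp _), hmem.coeFn_toLp] with x hx hx'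
      rw [hx, hx', pow_succ]
      ring

lemma inv_mem_Hinf {θ : Linf} (hθ : θ ∈ Hinf)
    (hθ1 : ∀ᵐ x ∂muh, ‖(θ : Tc → ℂ) x‖ = 1) {c : ℂ} (hc : ‖c‖ < 1) {v : Linf}
    (hv : (v : Tc → ℂ) =ᵐ[muh] fun x => (1 - c * (θ : Tc → ℂ) x)⁻¹) : v ∈ Hinf := by
  have hb : (0:ℝ) < 1 - ‖c‖ := by linarith
  set SN : ℕ → Tc → ℂ := fun N x => ∑ k ∈ Finset.range N, (c * (θ : Tc → ℂ) x) ^ k with hSN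
  have hmes : ∀ k : ℕ, AEStronglyMeasurable (fun x => (c * (θ : Tc → ℂ) x) ^ k) muh :=
    fun k => (((Lp.aestronglyMeasurable θ).aemeasurable.const_mul c).pow_const
      k).aestronglyMeasurable
  have hSm : ∀ N, MemLp (SN N) 2 muh := by
    intro N
    refine (memLp_top_of_bound ?_ N ?_).mono_exponent le_top
    · exact Finset.aestronglyMeasurable_fun_sum _ fun k _ => hmes k
    · filter_upwards [hθ1] with x hx
      calc ‖SN N x‖ ≤ ∑ k ∈ Finset.range N, ‖(c * (θ : Tc → ℂ) x) ^ k‖ :=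
            norm_sum_le _ _
        _ ≤ ∑ k ∈ Finset.range N, 1 := by
            refine Finset.sum_le_sum fun k _ => ?_
            rw [norm_pow, norm_mul, hx, mul_one]
            exact pow_le_one₀ (norm_nonneg c) hc.le
        _ ≤ N := by simp
  have hsNH : ∀ N, (hSm N).toLp (SN N) ∈ H2 := by
    intro N
    refine mem_H2_of_fourierCoeff fun n hn => ?_
    rw [fourierCoeff_congr_ae' (hSm N).coeFn_toLp]
    have hint : ∀ k ∈ Finset.range N,
        Integrable (fun x => fourier (-n) x • (c * (θ : Tc → ℂ) x) ^ k) muh := by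
      intro k _
      refine integrable_of_bdd (((fourier (-n)).continuous.aestronglyMeasurable).smul
        (hmes k)) (C := 1) ?_
      filter_upwards [hθ1] with x hx
      rw [smul_eq_mul, norm_mul, norm_fourier', one_mul, norm_pow, norm_mul, hx, mul_one]
      exact pow_le_one₀ (norm_nonneg c) hc.le
    have : fourierCoeff (SN N) n
        = ∑ k ∈ Finset.range N, fourierCoeff (fun x => (c * (θ : Tc → ℂ) x) ^ k) n := by
      unfold fourierCoeff
      rw [← integral_finset_sum _ hint]
      refine integral_congr_ae (Filter.Eventually.of_forall fun x => ?_)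
      rw [hSN]
      simp [smul_eq_mul, Finset.mul_sum]
    rw [this]
    refine Finset.sum_eq_zero fun k _ => ?_
    have : (fun x => (c * (θ : Tc → ℂ) x) ^ k) = fun x => c ^ k * (θ : Tc → ℂ) x ^ k := by
      funext x; rw [mul_pow]
    rw [this, fourierCoeff.const_mul, pow_coeff_zero hθ hθ1 k n hn, mul_zero]
  have hbound : ∀ N, ‖toL2 v - (hSm N).toLp (SN N)‖ ≤ ‖c‖ ^ N * (1 - ‖c‖)⁻¹ := by
    intro N
    have hae : ∀ᵐ x ∂muh, ‖(toL2 v - (hSm N).toLp (SN N) : L2) x‖ ≤ ‖c‖ ^ N * (1 - ‖c‖)⁻¹ := by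
      filter_upwards [Lp.coeFn_sub (toL2 v) ((hSm N).toLp (SN N)), coeFn_toL2 v,
        (hSm N).coeFn_toLp, hv, hθ1] with x h1 h2 h3 h4 h5
      rw [h1, Pi.sub_apply, h2, h4, h3]
      set r : ℂ := c * (θ : Tc → ℂ) x with hr
      have hrn : ‖r‖ = ‖c‖ := by rw [hr, norm_mul, h5, mul_one]
      have hlb : 1 - ‖c‖ ≤ ‖1 - r‖ := by
        calc 1 - ‖c‖ = ‖(1:ℂ)‖ - ‖r‖ := by rw [norm_one, hrn]
          _ ≤ ‖1 - r‖ := norm_sub_norm_le _ _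
      have hne : (1:ℂ) - r ≠ 0 := fun h => by
        rw [h, norm_zero] at hlb; linarith
      have hr1 : r ≠ 1 := fun h => hne (by rw [h, sub_self])
      have hSNx : SN N x = ∑ k ∈ Finset.range N, r ^ k := rfl
      have hgeom : SN N x = (1 - r ^ N) / (1 - r) := by
        rw [hSNx, geom_sum_eq hr1]
        rw [div_eq_div_iff (by intro h; apply hr1; rwa [sub_eq_zero] at h)
          (by intro h; apply hr1; rw [sub_eq_zero] at h; exact h.symm)]
        ring
      have : (1 - r)⁻¹ - SN N x = r ^ N / (1 - r) := by
        rw [hgeom, inv_eq_one_div, div_sub_div_same]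
        congr 1; ring
      rw [this, norm_div, norm_pow, hrn]
      rw [div_eq_mul_inv]
      have hinv : ‖1 - r‖⁻¹ ≤ (1 - ‖c‖)⁻¹ := by gcongr
      exact mul_le_mul_of_nonneg_left hinv (pow_nonneg (norm_nonneg c) N)
    have hB := Lp.norm_le_of_ae_bound
      (mul_nonneg (pow_nonneg (norm_nonneg c) N) (by positivity)) hae
    have h1 : measureUnivNNReal muh = 1 := by
      simp [measureUnivNNReal, measure_univ]
    rw [h1] at hB
    simpa using hB
  have htend : Filter.Tendsto (fun N => (hSm N).toLp (SN N)) Filter.atTop (nhds (toL2 v)) := by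
    rw [tendsto_iff_norm_sub_tendsto_zero]
    refine squeeze_zero (g := fun N => ‖c‖ ^ N * (1 - ‖c‖)⁻¹)
      (fun N => norm_nonneg _) (fun N => ?_) ?_
    · rw [norm_sub_rev]; exact hbound N
    · have := (tendsto_pow_atTop_nhds_zero_of_lt_one (norm_nonneg c) hc).mul_const
        ((1 - ‖c‖)⁻¹)
      simpa using this
  exact isClosed_H2.mem_of_tendsto htend (Filter.Eventually.of_forall hsNH)

end Aux

open scoped InnerProductSpace ComplexConjugate

/-- Lemma 3.4: for every nonconstant inner function `θ₀`, the model space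
`H_{θ₀}` contains an outer function that is invertible in `H^∞`. -/
theorem modelSpace_contains_invertible_outer
    (θ₀ : Linf) (h₁ : IsInner θ₀) (h₂ : ¬ IsConstLinf θ₀) :
    ∃ h : L2, h ∈ ModelSpace θ₀ ∧ IsOuter h ∧ InvertibleHinf h := by
  obtain ⟨hθH, hθ1⟩ := h₁
  have hθc : ∀ n : ℤ, n < 0 → fourierCoeff ((θ₀ : Tc → ℂ)) n = 0 := mem_Hinf_iff.mp hθH
  set c₀ : ℂ := fourierCoeff ((θ₀ : Tc → ℂ)) 0 with hc₀def
  have hnormθ : ‖toL2 θ₀‖ = 1 := by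
    rw [Lp.norm_def]
    have h1 : eLpNorm ((toL2 θ₀ : L2) : Tc → ℂ) 2 muh
        = eLpNorm (fun _ : Tc => (1 : ℂ)) 2 muh := by
      apply eLpNorm_congr_norm_ae
      filter_upwards [coeFn_toL2 θ₀, hθ1] with x hx h1
      rw [hx, h1]; simp
    rw [h1, eLpNorm_const _ (by norm_num) (IsProbabilityMeasure.ne_zero muh)]
    simp
  have he0 : (fourierLp 2 (0 : ℤ) : L2) ∈ H2 :=
    Submodule.le_topologicalClosure _ (Submodule.subset_span ⟨0, by norm_num⟩)
  have hne0 : ‖(fourierLp 2 (0 : ℤ) : L2)‖ = 1 := orthonormal_fourier.1 0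
  have hinner : ⟪(fourierLp 2 (0 : ℤ) : L2), toL2 θ₀⟫_ℂ = c₀ := by
    rw [inner_fourierLp, fourierCoeff_congr_ae' (coeFn_toL2 θ₀)]
  have hle : ‖c₀‖ ≤ 1 := by
    rw [← hinner]
    calc ‖⟪(fourierLp 2 (0 : ℤ) : L2), toL2 θ₀⟫_ℂ‖
        ≤ ‖(fourierLp 2 (0 : ℤ) : L2)‖ * ‖toL2 θ₀‖ := norm_inner_le_norm _ _
      _ = 1 := by rw [hne0, hnormθ, one_mul]
  have hc0lt : ‖c₀‖ < 1 := by
    rcases hle.lt_or_eq with hlt | heq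
    · exact hlt
    · exfalso
      apply h₂
      have heq2 : ‖⟪(fourierLp 2 (0 : ℤ) : L2), toL2 θ₀⟫_ℂ‖
          = ‖(fourierLp 2 (0 : ℤ) : L2)‖ * ‖toL2 θ₀‖ := by
        rw [hinner, heq, hne0, hnormθ, one_mul]
      have hx0 : (fourierLp 2 (0 : ℤ) : L2) ≠ 0 := by
        intro hx; rw [hx, norm_zero] at hne0; norm_num at hne0
      have hy0 : toL2 θ₀ ≠ 0 := by
        intro hx; rw [hx, norm_zero] at hnormθ; norm_num at hnormθ
      obtain ⟨r, hr0, hr⟩ := (norm_inner_eq_norm_iff hx0 hy0).mp heq2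
      refine ⟨r, ?_⟩
      apply Lp.ext
      have h1 : ((toL2 θ₀ : L2) : Tc → ℂ) =ᵐ[muh] fun _ => r := by
        rw [hr]
        filter_upwards [Lp.coeFn_smul r (fourierLp 2 (0 : ℤ) : L2),
          coeFn_fourierLp 2 (0 : ℤ)] with x hx h2
        rw [hx, Pi.smul_apply, h2, fourier_zero, smul_eq_mul, mul_one]
      filter_upwards [(coeFn_toL2 θ₀).symm.trans h1,
        Lp.coeFn_smul r (1 : Linf), coeFn_one_Linf] with x hx h2 h3
      rw [hx, h2, Pi.smul_apply, h3, smul_eq_mul, mul_one]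
  set c : ℂ := (starRingEnd ℂ) c₀ with hcdef
  have hcn : ‖c‖ = ‖c₀‖ := RCLike.norm_conj c₀
  set U : Tc → ℂ := fun x => 1 - c * (θ₀ : Tc → ℂ) x with hUdef
  have hUm : MemLp U ⊤ muh := (memLp_top_const 1).sub ((Lp.memLp θ₀).const_mul c)
  set u : Linf := hUm.toLp U with hudef
  have hu : (u : Tc → ℂ) =ᵐ[muh] U := hUm.coeFn_toLp
  set h : L2 := toL2 u with hhdef
  have hh : (h : Tc → ℂ) =ᵐ[muh] U := (coeFn_toL2 u).trans hu
  have hsplit : h = (fourierLp 2 (0 : ℤ) : L2) - c • toL2 θ₀ := by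
    apply Lp.ext
    filter_upwards [hh, Lp.coeFn_sub (fourierLp 2 (0 : ℤ) : L2) (c • toL2 θ₀),
      Lp.coeFn_smul c (toL2 θ₀), coeFn_fourierLp 2 (0 : ℤ), coeFn_toL2 θ₀]
      with x h1 h2 h3 h4 h5
    rw [h1, h2, Pi.sub_apply, h3, Pi.smul_apply, h4, h5, fourier_zero, smul_eq_mul]
  have hmemH2 : h ∈ H2 := by
    rw [hsplit]
    exact Submodule.sub_mem _ he0 (Submodule.smul_mem _ _ hθH)
  have horth : h ∈ (Submodule.map (Mmul θ₀ : L2 →ₗ[ℂ] L2) H2)ᗮ := by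
    rw [Submodule.mem_orthogonal']
    rintro y hy
    rw [Submodule.mem_map] at hy
    obtain ⟨g, hg, rfl⟩ := hy
    have hker : H2 ≤ LinearMap.ker (((innerSL ℂ h).comp (Mmul θ₀) : L2 →ₗ[ℂ] ℂ)) := by
      apply Submodule.topologicalClosure_minimal
      · rw [Submodule.span_le]
        rintro _ ⟨k, rfl⟩
        simp only [SetLike.mem_coe, LinearMap.mem_ker, ContinuousLinearMap.coe_coe,
          ContinuousLinearMap.comp_apply, innerSL_apply_apply]
        have hA : ⟪(fourierLp 2 (0 : ℤ) : L2), Mmul θ₀ (fourierLp 2 (k : ℤ))⟫_ℂ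
            = fourierCoeff ((θ₀ : Tc → ℂ)) (-(k : ℤ)) := by
          rw [inner_fourierLp, fourierCoeff_Mmul_fourierLp, zero_sub]
        have hB : ⟪toL2 θ₀, Mmul θ₀ (fourierLp 2 (k : ℤ))⟫_ℂ
            = ⟪(fourierLp 2 (0 : ℤ) : L2), (fourierLp 2 (k : ℤ) : L2)⟫_ℂ := by
          apply inner_L2_congr
          filter_upwards [coeFn_toL2 θ₀, coeFn_Mmul θ₀ (fourierLp 2 (k : ℤ)),
            coeFn_fourierLp 2 (k : ℤ), coeFn_fourierLp 2 (0 : ℤ), hθ1]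
            with x h1 h2 h3 h4 h5
          rw [h1, h2, h3, h4, fourier_zero]
          have hz : (starRingEnd ℂ) ((θ₀ : Tc → ℂ) x) * (θ₀ : Tc → ℂ) x = 1 := by
            rw [mul_comm, Complex.mul_conj, Complex.normSq_eq_norm_sq,
              h5]
            norm_num
          rw [map_one, one_mul, ← mul_assoc, hz, one_mul]
        rw [hsplit, inner_sub_left, inner_smul_left, hA, hB,
          orthonormal_iff_ite.mp orthonormal_fourier]
        by_cases hk : k = 0
        · subst hk
          rw [hcdef, Complex.conj_conj]
          simp [← hc₀def]
        · rw [hθc _ (by omega), if_neg (by omega)]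
          simp
      · exact ContinuousLinearMap.isClosed_ker _
    have hker2 := hker hg
    rw [LinearMap.mem_ker] at hker2
    simpa using hker2
  have hbpos : (0 : ℝ) < 1 - ‖c₀‖ := by linarith
  have hUlb : ∀ᵐ x ∂muh, 1 - ‖c₀‖ ≤ ‖U x‖ := by
    filter_upwards [hθ1] with x hx
    calc 1 - ‖c₀‖ = ‖(1 : ℂ)‖ - ‖c * (θ₀ : Tc → ℂ) x‖ := by
          rw [norm_one, norm_mul, hcn, hx, mul_one]
      _ ≤ ‖U x‖ := norm_sub_norm_le _ _
  have hUne : ∀ᵐ x ∂muh, U x ≠ 0 := by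
    filter_upwards [hUlb] with x hx hx0
    rw [hx0, norm_zero] at hx; linarith
  set V : Tc → ℂ := fun x => (U x)⁻¹ with hVdef
  have hVmes : AEStronglyMeasurable V muh :=
    hUm.aestronglyMeasurable.aemeasurable.inv.aestronglyMeasurable
  have hVm : MemLp V ⊤ muh := by
    refine memLp_top_of_bound hVmes ((1 - ‖c₀‖)⁻¹) ?_
    filter_upwards [hUlb] with x hx1
    rw [norm_inv]
    have h0 : (0:ℝ) < ‖U x‖ := lt_of_lt_of_le hbpos hx1
    rw [inv_le_inv₀ h0 hbpos]
    exact hx1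
  set v : Linf := hVm.toLp V with hvdef
  have hvv : (v : Tc → ℂ) =ᵐ[muh] V := hVm.coeFn_toLp
  have huH : u ∈ Hinf := hmemH2
  have hvH : v ∈ Hinf := by
    refine inv_mem_Hinf hθH hθ1 (c := c) (by rw [hcn]; exact hc0lt) ?_
    exact hvv
  have huv : u * v = 1 := by
    apply Lp.ext
    have hmul : ((u * v : Linf) : Tc → ℂ)
        =ᵐ[muh] fun x => (u : Tc → ℂ) x * (v : Tc → ℂ) x :=
      (memLpTop_mul u v).coeFn_toLp
    filter_upwards [hmul, hu, hvv, hUne, coeFn_one_Linf]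
      with x h1 h2 h3 h4 h5
    rw [h1, h2, h3, h5]
    exact mul_inv_cancel₀ h4
  have hucoef : ∀ n : ℤ, n < 0 → fourierCoeff ((u : Tc → ℂ)) n = 0 := mem_Hinf_iff.mp huH
  have hvcoef : ∀ n : ℤ, n < 0 → fourierCoeff ((v : Tc → ℂ)) n = 0 := mem_Hinf_iff.mp hvH
  have hgen : ∀ n : ℕ, mulL2 (fourierLp ⊤ (n : ℤ)) h = Mmul u (fourierLp 2 (n : ℤ)) := by
    intro n
    apply Lp.ext
    filter_upwards [coeFn_mulL2 (fourierLp ⊤ (n : ℤ)) h,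
      coeFn_Mmul u (fourierLp 2 (n : ℤ)), coeFn_fourierLp ⊤ (n : ℤ),
      coeFn_fourierLp 2 (n : ℤ), hh, hu] with x h1 h2 h3 h4 h5 h6
    rw [h1, h2, h3, h4, h5, h6]
    ring
  refine ⟨h, Submodule.mem_inf.mpr ⟨hmemH2, horth⟩, ?_, ⟨u, v, hhdef.symm, huH, hvH, huv⟩⟩
  unfold IsOuter
  apply le_antisymm
  · apply Submodule.topologicalClosure_minimal
    · rw [Submodule.span_le]
      rintro _ ⟨n, rfl⟩
      simp only [SetLike.mem_coe]
      rw [hgen n]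
      exact Mmul_mem_H2 hucoef
        (Submodule.le_topologicalClosure _ (Submodule.subset_span ⟨n, rfl⟩))
    · exact isClosed_H2
  · intro f hf
    have hg : Mmul v f ∈ H2 := Mmul_mem_H2 hvcoef hf
    have hfe : Mmul u (Mmul v f) = f := by
      apply Lp.ext
      filter_upwards [coeFn_Mmul u (Mmul v f), coeFn_Mmul v f, hu, hvv, hUne]
        with x h1 h2 h3 h4 h5
      rw [h1, h2, h3, h4, ← mul_assoc, mul_inv_cancel₀ h5, one_mul]
    have h1 : (Mmul v f : L2)
        ∈ closure ((span ℂ (Set.range fun n : ℕ => (fourierLp 2 (n : ℤ) : L2))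
          : Submodule ℂ L2) : Set L2) := hg
    have h2 : f ∈ closure ((Mmul u) ''
        ((span ℂ (Set.range fun n : ℕ => (fourierLp 2 (n : ℤ) : L2))
          : Submodule ℂ L2) : Set L2)) := by
      rw [← hfe]
      exact image_closure_subset_closure_image (Mmul u).continuous ⟨_, h1, rfl⟩
    have h3 : (Mmul u) ''
        ((span ℂ (Set.range fun n : ℕ => (fourierLp 2 (n : ℤ) : L2))
          : Submodule ℂ L2) : Set L2)
        ⊆ ((span ℂ (Set.range fun n : ℕ => mulL2 (fourierLp ⊤ (n : ℤ)) h)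
          : Submodule ℂ L2) : Set L2) := by
      rintro _ ⟨z, hz, rfl⟩
      have hmem : Mmul u z ∈ Submodule.map (Mmul u : L2 →ₗ[ℂ] L2)
          (span ℂ (Set.range fun n : ℕ => (fourierLp 2 (n : ℤ) : L2))) :=
        Submodule.mem_map_of_mem hz
      rw [Submodule.map_span] at hmem
      refine Submodule.span_le.mpr ?_ hmem
      rintro _ ⟨w, ⟨n, rfl⟩, rfl⟩
      exact Submodule.subset_span ⟨n, by simpa using hgen n⟩
    exact closure_mono h3 h2
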